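/- (Proposition 3, initial-boundary case, one dimension.) Let θ ∈ [0,1] be real and N a positive integer. Let Y = {1,…,N+1} and X = {1,…,N}, and let π map a pair (s,l) with l ≥ 1 and s ≤ N to the restricted patch (s, min(l, N−s+1)) on X. Then for every s_X ∈ {1,…,N} and every l_X ∈ {1,…,N−s_X+1}: P_Y({(s,l) : l ≥ 1, s ≤ N, π(s,l) = (s_X,l_X)}) / P_Y({(s,l) : l ≥ 1, s ≤ N}) = P_X({(s_X,l_X)}) / P_X({(s,l) : l ≥ 1}), where P_Y and P_X denote the original-construction candidate-patch distributions on dimension sizes N+1 and N respectively. -/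

import Mathlib

/-- Initial-position factor `c`: `c θ 1 = 1`, `c θ s = 1 - θ` for `s ≥ 2`. -/
noncomputable def c (θ : ℝ) (s : ℕ) : ℝ := if s = 1 then 1 else 1 - θ

/-- Truncated geometric side-length distribution on dimension size `N` given start `s`. -/
noncomputable def q (θ : ℝ) (N s l : ℕ) : ℝ :=
  if l = N - s + 1 then θ ^ (N - s) else θ ^ (l - 1) * (1 - θ)

/-- Conditional law of the side-length `l` given the start `s` in the original construction. -/
noncomputable def condL (θ : ℝ) (N s l : ℕ) : ℝ :=
  if l = 0 then (if s = 1 then 0 else θ) else c θ s * q θ N s l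

/-- The original-construction candidate-patch distribution on dimension size `N`. -/
noncomputable def origP (θ : ℝ) (N : ℕ) (p : ℕ × ℕ) : ℝ :=
  if 1 ≤ p.1 ∧ p.1 ≤ N ∧ p.2 ≤ N - p.1 + 1 then (1 / (N : ℝ)) * condL θ N p.1 p.2 else 0

open Finset

lemma gs_aux (θ : ℝ) : ∀ m : ℕ, ∑ i ∈ range m, θ ^ i * (1 - θ) = 1 - θ ^ m := by
  intro m
  induction m with
  | zero => simp
  | succ n ih => rw [sum_range_succ, ih, pow_succ]; ring

lemma qsum (θ : ℝ) (M s : ℕ) (hs : s ≤ M) :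
    ∑ l ∈ Icc 1 (M - s + 1), q θ M s l = 1 := by
  rw [← Finset.Ico_add_one_right_eq_Icc, Finset.sum_Ico_eq_sum_range]
  have h1 : M - s + 1 + 1 - 1 = M - s + 1 := by omega
  rw [h1, sum_range_succ]
  have h2 : ∀ i ∈ range (M - s), q θ M s (1 + i) = θ ^ i * (1 - θ) := by
    intro i hi
    simp only [mem_range] at hi
    have : ¬ (1 + i = M - s + 1) := by omega
    have h3 : 1 + i - 1 = i := by omega
    simp [q, this, h3]
  rw [sum_congr rfl h2, gs_aux]
  have : (1 + (M - s) = M - s + 1) := by omega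
  simp [q, this]

lemma origP_inner (θ : ℝ) (M s L : ℕ) (hs1 : 1 ≤ s) (hsM : s ≤ M)
    (hL : M - s + 1 ≤ L) :
    ∑ l ∈ Icc 1 L, origP θ M (s, l) = (1 / (M : ℝ)) * c θ s := by
  have h : ∑ l ∈ Icc 1 L, origP θ M (s, l) = ∑ l ∈ Icc 1 (M - s + 1), origP θ M (s, l) := by
    symm
    apply sum_subset (Icc_subset_Icc le_rfl hL)
    intro l hl hnl
    simp only [mem_Icc] at hl hnl
    have : ¬ (l ≤ M - s + 1) := by omega
    simp [origP, this]
  rw [h]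
  have h2 : ∀ l ∈ Icc 1 (M - s + 1), origP θ M (s, l) = (1 / (M : ℝ)) * c θ s * q θ M s l := by
    intro l hl
    simp only [mem_Icc] at hl
    have hl0 : l ≠ 0 := by omega
    simp [origP, condL, hs1, hsM, hl.2, hl0, mul_assoc]
  rw [sum_congr rfl h2, ← mul_sum, qsum θ M s hsM, mul_one]

lemma csum (θ : ℝ) (N : ℕ) (hN : 0 < N) :
    ∑ s ∈ Icc 1 N, c θ s = N * (1 - θ) + θ := by
  have h : ∀ s ∈ Icc 1 N, c θ s = (1 - θ) + (if s = 1 then θ else 0) := by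
    intro s _; by_cases h1 : s = 1 <;> simp [c, h1]
  rw [sum_congr rfl h, sum_add_distrib, sum_const, Nat.card_Icc]
  have h2 : (∑ s ∈ Icc 1 N, if s = 1 then θ else 0) = θ := by
    rw [Finset.sum_ite_eq' (Icc 1 N) 1 (fun _ => θ)]
    have h1 : (1 : ℕ) ∈ Icc 1 N := by simp only [mem_Icc]; omega
    rw [if_pos h1]
  rw [h2]
  have h3 : N + 1 - 1 = N := by omega
  rw [h3, nsmul_eq_mul]

lemma denomY (θ : ℝ) (N : ℕ) (hN : 0 < N) :
    (∑ p ∈ Icc 1 (N + 1) ×ˢ Icc 0 (N + 1),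
        if 1 ≤ p.2 ∧ p.1 ≤ N then origP θ (N + 1) p else 0)
      = (1 / ((N : ℝ) + 1)) * ((N : ℝ) * (1 - θ) + θ) := by
  rw [Finset.sum_product]
  have hinner : ∀ s ∈ Icc 1 (N + 1),
      (∑ l ∈ Icc 0 (N + 1), if 1 ≤ l ∧ s ≤ N then origP θ (N + 1) (s, l) else 0)
        = if s ≤ N then (1 / ((N : ℝ) + 1)) * c θ s else 0 := by
    intro s hs
    simp only [mem_Icc] at hs
    by_cases hsN : s ≤ N
    · simp only [hsN, and_true, if_true]
      have hI : Icc 0 (N + 1) = insert 0 (Icc 1 (N + 1)) := by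
        ext x; simp only [mem_Icc, mem_insert]; omega
      rw [hI, sum_insert (by simp)]
      rw [if_neg (by omega), zero_add]
      have h2 : ∀ l ∈ Icc 1 (N + 1),
          (if 1 ≤ l then origP θ (N + 1) (s, l) else 0) = origP θ (N + 1) (s, l) := by
        intro l hl; simp only [mem_Icc] at hl; simp [hl.1]
      rw [sum_congr rfl h2, origP_inner θ (N + 1) s (N + 1) hs.1 (by omega) (by omega)]
      push_cast; ring
    · have h2 : ∀ l ∈ Icc 0 (N + 1),
          (if 1 ≤ l ∧ s ≤ N then origP θ (N + 1) (s, l) else 0) = 0 := by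
        intro l _; simp [hsN]
      rw [sum_congr rfl h2]; simp [hsN]
  rw [sum_congr rfl hinner, Finset.sum_ite, Finset.sum_const, smul_zero, add_zero]
  have hf : Finset.filter (fun s => s ≤ N) (Icc 1 (N + 1)) = Icc 1 N := by
    ext x; simp only [mem_filter, mem_Icc]; omega
  rw [hf, ← mul_sum, csum θ N hN]

lemma denomX (θ : ℝ) (N : ℕ) (hN : 0 < N) :
    (∑ p ∈ Icc 1 N ×ˢ Icc 1 N, origP θ N p)
      = (1 / (N : ℝ)) * ((N : ℝ) * (1 - θ) + θ) := by
  rw [Finset.sum_product]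
  have hinner : ∀ s ∈ Icc 1 N, ∑ l ∈ Icc 1 N, origP θ N (s, l) = (1 / (N : ℝ)) * c θ s := by
    intro s hs; simp only [mem_Icc] at hs
    exact origP_inner θ N s N hs.1 hs.2 (by omega)
  rw [sum_congr rfl hinner, ← mul_sum, csum θ N hN]

lemma numY (θ : ℝ) (N : ℕ) (sX lX : ℕ)
    (hs1 : 1 ≤ sX) (hs2 : sX ≤ N) (hl1 : 1 ≤ lX) (hl2 : lX ≤ N - sX + 1) :
    (∑ p ∈ Icc 1 (N + 1) ×ˢ Icc 0 (N + 1),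
        if 1 ≤ p.2 ∧ p.1 ≤ N ∧ p.1 = sX ∧ min p.2 (N - p.1 + 1) = lX then
          origP θ (N + 1) p else 0)
      = (1 / ((N : ℝ) + 1)) * (c θ sX * q θ N sX lX) := by
  by_cases hcase : lX = N - sX + 1
  · -- boundary case: two contributing points
    have hqX : q θ N sX lX = θ ^ (lX - 1) := by
      rw [q, if_pos hcase]; congr 1; omega
    have hne : ((sX, lX) : ℕ × ℕ) ≠ (sX, lX + 1) := by simp
    have hsub : (∑ p ∈ Icc 1 (N + 1) ×ˢ Icc 0 (N + 1),
        if 1 ≤ p.2 ∧ p.1 ≤ N ∧ p.1 = sX ∧ min p.2 (N - p.1 + 1) = lX then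
          origP θ (N + 1) p else 0)
        = ∑ p ∈ ({(sX, lX), (sX, lX + 1)} : Finset (ℕ × ℕ)),
            (if 1 ≤ p.2 ∧ p.1 ≤ N ∧ p.1 = sX ∧ min p.2 (N - p.1 + 1) = lX then
              origP θ (N + 1) p else 0) := by
      symm
      apply sum_subset
      · intro p hp
        simp only [mem_insert, mem_singleton] at hp
        rcases hp with rfl | rfl <;> · simp only [mem_product, mem_Icc]; omega
      · rintro ⟨p1, p2⟩ _ hnp
        simp only [mem_insert, mem_singleton, Prod.mk.injEq, not_or, not_and] at hnp
        by_cases hcond : 1 ≤ p2 ∧ p1 ≤ N ∧ p1 = sX ∧ min p2 (N - p1 + 1) = lX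
        · obtain ⟨h1, h2, h3, h4⟩ := hcond
          subst h3
          have ha := hnp.1 rfl
          have hb := hnp.2 rfl
          have hp2 : lX + 2 ≤ p2 := by omega
          rw [if_pos ⟨h1, h2, rfl, h4⟩]
          have hno : ¬ (1 ≤ (p1, p2).1 ∧ (p1, p2).1 ≤ N + 1 ∧ (p1, p2).2 ≤ N + 1 - (p1, p2).1 + 1) := by
            simp only [not_and]
            intro _ _
            omega
          rw [origP, if_neg hno]
        · rw [if_neg hcond]
    rw [hsub, Finset.sum_pair hne]
    have hx1 : (if 1 ≤ ((sX, lX) : ℕ × ℕ).2 ∧ ((sX, lX) : ℕ × ℕ).1 ≤ N ∧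
        ((sX, lX) : ℕ × ℕ).1 = sX ∧ min ((sX, lX) : ℕ × ℕ).2 (N - ((sX, lX) : ℕ × ℕ).1 + 1) = lX then
          origP θ (N + 1) (sX, lX) else 0) = origP θ (N + 1) (sX, lX) := by
      exact if_pos ⟨hl1, hs2, rfl, by omega⟩
    have hx2 : (if 1 ≤ ((sX, lX + 1) : ℕ × ℕ).2 ∧ ((sX, lX + 1) : ℕ × ℕ).1 ≤ N ∧
        ((sX, lX + 1) : ℕ × ℕ).1 = sX ∧
        min ((sX, lX + 1) : ℕ × ℕ).2 (N - ((sX, lX + 1) : ℕ × ℕ).1 + 1) = lX then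
          origP θ (N + 1) (sX, lX + 1) else 0) = origP θ (N + 1) (sX, lX + 1) := by
      exact if_pos ⟨by omega, hs2, rfl, by omega⟩
    rw [hx1, hx2]
    have hv1 : origP θ (N + 1) (sX, lX)
        = (1 / ((N : ℝ) + 1)) * (c θ sX * (θ ^ (lX - 1) * (1 - θ))) := by
      have h1 : lX ≠ N + 1 - sX + 1 := by omega
      have h2 : lX ≠ 0 := by omega
      have h3 : lX ≤ N + 1 - sX + 1 := by omega
      rw [origP, if_pos ⟨hs1, by omega, h3⟩, condL, if_neg h2, q, if_neg h1]
      push_cast; ring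
    have hv2 : origP θ (N + 1) (sX, lX + 1)
        = (1 / ((N : ℝ) + 1)) * (c θ sX * (θ ^ (lX - 1) * θ)) := by
      have h1 : lX + 1 = N + 1 - sX + 1 := by omega
      have h4 : lX + 1 ≤ N + 1 - sX + 1 := by omega
      rw [origP, if_pos ⟨hs1, by omega, h4⟩, condL, if_neg (by omega), q, if_pos h1]
      have h5 : N + 1 - sX = (lX - 1) + 1 := by omega
      rw [h5, pow_succ]
      push_cast; ring
    rw [hv1, hv2, hqX]
    ring
  · -- interior case: single contributing point
    have hqX : q θ N sX lX = θ ^ (lX - 1) * (1 - θ) := by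
      rw [q, if_neg hcase]
    rw [Finset.sum_eq_single_of_mem ((sX, lX) : ℕ × ℕ)
      (by simp only [mem_product, mem_Icc]; omega)
      (by
        rintro ⟨p1, p2⟩ _ hnp
        by_cases hcond : 1 ≤ p2 ∧ p1 ≤ N ∧ p1 = sX ∧ min p2 (N - p1 + 1) = lX
        · exfalso
          obtain ⟨h1, h2, h3, h4⟩ := hcond
          subst h3
          have : p2 = lX := by omega
          exact hnp (by rw [this])
        · exact if_neg hcond)]
    rw [if_pos ⟨hl1, hs2, rfl, by omega⟩]
    have h1 : lX ≠ N + 1 - sX + 1 := by omega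
    have h2 : lX ≠ 0 := by omega
    have h3 : lX ≤ N + 1 - sX + 1 := by omega
    rw [origP, if_pos ⟨hs1, by omega, h3⟩, condL, if_neg h2, q, if_neg h1, hqX]
    push_cast; ring



/-- Proposition 3, initial-boundary case, one dimension: with `Y = {1,…,N+1}`,
`X = {1,…,N}`, and `π (s,l) = (s, min l (N−s+1))` defined on patches with `l ≥ 1` and
`s ≤ N`, for every admissible target `(s_X, l_X)` on `X`:
`P_Y(π⁻¹(s_X,l_X)) / P_Y(restriction nonempty) = P_X((s_X,l_X)) / P_X(l ≥ 1)`. -/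
theorem spp_position_self_consistent_initial (θ : ℝ) (hθ0 : 0 ≤ θ) (hθ1 : θ ≤ 1)
    (N : ℕ) (hN : 0 < N) (sX lX : ℕ)
    (hsX : 1 ≤ sX ∧ sX ≤ N) (hlX : 1 ≤ lX ∧ lX ≤ N - sX + 1) :
    (∑ p ∈ Finset.Icc 1 (N + 1) ×ˢ Finset.Icc 0 (N + 1),
        if 1 ≤ p.2 ∧ p.1 ≤ N ∧ p.1 = sX ∧ min p.2 (N - p.1 + 1) = lX then
          origP θ (N + 1) p else 0) /
    (∑ p ∈ Finset.Icc 1 (N + 1) ×ˢ Finset.Icc 0 (N + 1),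
        if 1 ≤ p.2 ∧ p.1 ≤ N then origP θ (N + 1) p else 0)
      = origP θ N (sX, lX) /
        (∑ p ∈ Finset.Icc 1 N ×ˢ Finset.Icc 1 N, origP θ N p) := by
  obtain ⟨hs1, hs2⟩ := hsX
  obtain ⟨hl1, hl2⟩ := hlX
  have hRX : origP θ N (sX, lX) = (1 / (N : ℝ)) * (c θ sX * q θ N sX lX) := by
    rw [origP, if_pos ⟨hs1, hs2, hl2⟩, condL]
    rw [if_neg (by omega : lX ≠ 0)]
  rw [numY θ N sX lX hs1 hs2 hl1 hl2, denomY θ N hN, hRX, denomX θ N hN]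
  have ha : (1 / ((N : ℝ) + 1)) ≠ 0 := by positivity
  have hb : (1 / (N : ℝ)) ≠ 0 := by
    have : (0:ℝ) < N := by exact_mod_cast hN
    positivity
  rw [mul_div_mul_left _ _ ha, mul_div_mul_left _ _ hb]
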